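/- Fix γ ∈ (0, 1) and an integer n ≥ 1, and let ψ : ℝ → ℝ satisfy 0 ≤ ψ ≤ 1. Define σ : ℝ → ℝ by σ(x) = ψ(x)·(|x|^γ · 1{|x| > 1/n} + n^{1−γ}|x| · 1{|x| ≤ 1/n}). Then for all x ∈ ℝ, |σ(x) − |x|^γ| ≤ (1 − ψ(x))·(2 + |x|) + n^{−γ}·(γ^{γ/(1−γ)} − γ^{1/(1−γ)}). -/

import Mathlib

/-- `σ(x) = ψ(x)·(|x|^γ · 1{|x| > 1/n} + n^{1−γ}|x| · 1{|x| ≤ 1/n})`. -/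
noncomputable def sigmaApprox (γ : ℝ) (n : ℕ) (ψ : ℝ → ℝ) (x : ℝ) : ℝ :=
  ψ x * (if 1 / (n : ℝ) < |x| then |x| ^ γ else (n : ℝ) ^ (1 - γ) * |x|)

/-- Tangent-line bound: `t^γ − n^{1−γ} t ≤ n^{−γ}(γ^{γ/(1−γ)} − γ^{1/(1−γ)})`. -/
lemma key_tangent (γ : ℝ) (hγ0 : 0 < γ) (hγ1 : γ < 1) (n : ℕ) (hn : 1 ≤ n)
    (t : ℝ) (ht : 0 ≤ t) :
    t ^ γ - (n : ℝ) ^ (1 - γ) * t ≤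
      (n : ℝ) ^ (-γ) * (γ ^ (γ / (1 - γ)) - γ ^ (1 / (1 - γ))) := by
  have hn0 : (0:ℝ) < n := by exact_mod_cast Nat.pos_of_ne_zero (by omega)
  have h1γ : (0:ℝ) < 1 - γ := by linarith
  set c : ℝ := γ ^ (1 / (1 - γ)) / n with hc_def
  have ha0 : 0 < γ ^ (1 / (1 - γ)) := Real.rpow_pos_of_pos hγ0 _
  have hc : 0 < c := div_pos ha0 hn0
  have h1 : c ^ γ = γ ^ (γ / (1 - γ)) * (n : ℝ) ^ (-γ) := by
    rw [hc_def, Real.div_rpow ha0.le hn0.le, ← Real.rpow_mul hγ0.le,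
      Real.rpow_neg hn0.le]
    rw [show 1 / (1 - γ) * γ = γ / (1 - γ) by ring, div_eq_mul_inv]
  have h2 : γ * c ^ (γ - 1) = (n : ℝ) ^ (1 - γ) := by
    rw [hc_def, Real.div_rpow ha0.le hn0.le, ← Real.rpow_mul hγ0.le,
      show 1 / (1 - γ) * (γ - 1) = -1 by field_simp; ring,
      Real.rpow_neg_one,
      show (γ - 1 : ℝ) = -(1 - γ) by ring, Real.rpow_neg hn0.le]
    have hne : (n : ℝ) ^ (1 - γ) ≠ 0 := ne_of_gt (Real.rpow_pos_of_pos hn0 _)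
    field_simp
  have hmul : γ * γ ^ (γ / (1 - γ)) = γ ^ (1 / (1 - γ)) := by
    rw [show (1:ℝ) / (1 - γ) = 1 + γ / (1 - γ) by field_simp; ring,
      Real.rpow_add hγ0, Real.rpow_one]
  have h3 : γ * c ^ γ = γ ^ (1 / (1 - γ)) * (n : ℝ) ^ (-γ) := by
    rw [h1, ← mul_assoc, hmul]
  have geom := Real.geom_mean_le_arith_mean2_weighted h1γ.le hγ0.le
    (Real.rpow_nonneg hc.le γ) (mul_nonneg (Real.rpow_nonneg hc.le (γ - 1)) ht)
    (by ring)
  have hlhs : (c ^ γ) ^ (1 - γ) * (c ^ (γ - 1) * t) ^ γ = t ^ γ := by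
    rw [Real.mul_rpow (Real.rpow_nonneg hc.le _) ht, ← Real.rpow_mul hc.le,
      ← Real.rpow_mul hc.le, ← mul_assoc, ← Real.rpow_add hc,
      show γ * (1 - γ) + (γ - 1) * γ = 0 by ring, Real.rpow_zero, one_mul]
  rw [hlhs] at geom
  have h2t : γ * (c ^ (γ - 1) * t) = (n : ℝ) ^ (1 - γ) * t := by
    rw [← mul_assoc, h2]
  rw [h2t] at geom
  have expand : (1 - γ) * c ^ γ = c ^ γ - γ * c ^ γ := by ring
  linarith [geom, h1, h3]

/-- If `0 ≤ ψ ≤ 1`, then for all `x`,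
`|σ(x) − |x|^γ| ≤ (1 − ψ(x))(2 + |x|) + n^{−γ}(γ^{γ/(1−γ)} − γ^{1/(1−γ)})`. -/
theorem stmt13 (γ : ℝ) (hγ : γ ∈ Set.Ioo (0:ℝ) 1) (n : ℕ) (hn : 1 ≤ n)
    (ψ : ℝ → ℝ) (hψ : ∀ x, 0 ≤ ψ x ∧ ψ x ≤ 1) :
    ∀ x : ℝ, |sigmaApprox γ n ψ x - |x| ^ γ| ≤
      (1 - ψ x) * (2 + |x|) +
        (n : ℝ) ^ (-γ) * (γ ^ (γ / (1 - γ)) - γ ^ (1 / (1 - γ))) := by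
  intro x
  obtain ⟨hγ0, hγ1⟩ := hγ
  obtain ⟨hψ0, hψ1⟩ := hψ x
  have hn1 : (1:ℝ) ≤ n := by exact_mod_cast hn
  have hn0 : (0:ℝ) < n := by linarith
  have h1γ : (0:ℝ) < 1 - γ := by linarith
  have hK : 0 ≤ (n : ℝ) ^ (-γ) * (γ ^ (γ / (1 - γ)) - γ ^ (1 / (1 - γ))) := by
    apply mul_nonneg (Real.rpow_nonneg hn0.le _)
    have hle : γ / (1 - γ) ≤ 1 / (1 - γ) := by
      apply div_le_div_of_nonneg_right <;> linarith
    have := Real.rpow_le_rpow_of_exponent_ge hγ0 hγ1.le hle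
    linarith
  unfold sigmaApprox
  split_ifs with h
  · -- outer region: σ(x) = ψ(x)|x|^γ
    have hxγ : 0 ≤ |x| ^ γ := Real.rpow_nonneg (abs_nonneg x) γ
    have hx : |x| ^ γ ≤ 2 + |x| := by
      rcases le_or_gt |x| 1 with h1 | h1
      · have := Real.rpow_le_one (abs_nonneg x) h1 hγ0.le
        have := abs_nonneg x
        linarith
      · have h2 := Real.rpow_le_rpow_of_exponent_le h1.le hγ1.le
        rw [Real.rpow_one] at h2
        linarith
    have he : ψ x * |x| ^ γ - |x| ^ γ = -((1 - ψ x) * |x| ^ γ) := by ring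
    rw [he, abs_neg, abs_of_nonneg (mul_nonneg (by linarith) hxγ)]
    have : (1 - ψ x) * |x| ^ γ ≤ (1 - ψ x) * (2 + |x|) :=
      mul_le_mul_of_nonneg_left hx (by linarith)
    linarith
  · -- inner region: σ(x) = ψ(x) n^{1-γ}|x|
    push_neg at h
    set A : ℝ := (n : ℝ) ^ (1 - γ) * |x| with hA_def
    have hA0 : 0 ≤ A := mul_nonneg (Real.rpow_nonneg hn0.le _) (abs_nonneg x)
    have hb : A ≤ |x| ^ γ := by
      rcases (abs_nonneg x).eq_or_lt with h0 | h0
      · rw [hA_def, ← h0, Real.zero_rpow (ne_of_gt hγ0)]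
        simp [← h0]
      · have e1 : (1 / (n : ℝ)) ^ (γ - 1) = (n : ℝ) ^ (1 - γ) := by
          rw [one_div, Real.inv_rpow hn0.le, ← Real.rpow_neg hn0.le, neg_sub]
        have e2 : (1 / (n : ℝ)) ^ (γ - 1) ≤ |x| ^ (γ - 1) :=
          Real.rpow_le_rpow_of_nonpos h0 h (by linarith)
        have e3 : |x| ^ (γ - 1) * |x| = |x| ^ γ := by
          rw [← Real.rpow_add_one (ne_of_gt h0), show γ - 1 + 1 = γ by ring]
        calc A = (n : ℝ) ^ (1 - γ) * |x| := rfl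
          _ ≤ |x| ^ (γ - 1) * |x| := by
              apply mul_le_mul_of_nonneg_right _ (abs_nonneg x)
              rw [← e1]; exact e2
          _ = |x| ^ γ := e3
    have hb2 : |x| ^ γ - A ≤ (n : ℝ) ^ (-γ) * (γ ^ (γ / (1 - γ)) - γ ^ (1 / (1 - γ))) := by
      rw [hA_def]
      exact key_tangent γ hγ0 hγ1 n hn |x| (abs_nonneg x)
    have hA1 : A ≤ 1 := by
      have s1 : A ≤ (n : ℝ) ^ (1 - γ) * (1 / n) :=
        mul_le_mul_of_nonneg_left h (Real.rpow_nonneg hn0.le _)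
      have s2 : (n : ℝ) ^ (1 - γ) * (1 / n) = (n : ℝ) ^ (-γ) := by
        rw [show (1 : ℝ) / n = (n : ℝ) ^ (-1 : ℝ) by
            rw [Real.rpow_neg_one, one_div],
          ← Real.rpow_add hn0, show 1 - γ + -1 = -γ by ring]
      have s3 : (n : ℝ) ^ (-γ) ≤ 1 :=
        Real.rpow_le_one_of_one_le_of_nonpos hn1 (by linarith)
      linarith
    have he : ψ x * A - |x| ^ γ = -((1 - ψ x) * A + (|x| ^ γ - A)) := by ring
    rw [he, abs_neg, abs_of_nonneg (by nlinarith : (0:ℝ) ≤ (1 - ψ x) * A + (|x| ^ γ - A))]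
    have t1 : (1 - ψ x) * A ≤ (1 - ψ x) * (2 + |x|) := by
      apply mul_le_mul_of_nonneg_left _ (by linarith)
      have := abs_nonneg x
      linarith
    linarith
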